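/- Let p ≥ 6 be an integer and let G = (V,E) be an infinite tree (a connected acyclic simple graph) in which every vertex has degree exactly p. Fix an edge ê ∈ E and define edge lengths ℓ : E → (0,∞) by ℓ(ê) = p and ℓ(e) = 1 for all e ≠ ê. Then α(G) = 2/p. -/

import Mathlib

open scoped BigOperators

noncomputable section

variable {V : Type*}

/-- Total length of a set of edges. -/
def mes (ℓ : Sym2 V → ℝ) (E : Set (Sym2 V)) : ℝ := ∑ᶠ e ∈ E, ℓ e

/-- Weight `m(v)` of a vertex: total length of the edges incident to `v`. -/
def mval (G : SimpleGraph V) (ℓ : Sym2 V → ℝ) (v : V) : ℝ := ∑ᶠ e ∈ G.incidenceSet v, ℓ e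

/-- Characteristic value of an edge (tree case: no tile terms). -/
def cVal (G : SimpleGraph V) (ℓ : Sym2 V → ℝ) (e : Sym2 V) : ℝ :=
  1 / ℓ e - ∑ᶠ w ∈ {w : V | w ∈ e}, 1 / mval G ℓ w

/-- Boundary vertices of a subgraph. -/
def bdry (G : SimpleGraph V) (H : G.Subgraph) : Set V :=
  {v ∈ H.verts | (H.neighborSet v).ncard < (G.neighborSet v).ncard}

/-- Total (subgraph-)degree of the boundary of a subgraph. -/
def degBdry (G : SimpleGraph V) (H : G.Subgraph) : ℝ :=
  ∑ᶠ v ∈ bdry G H, ((H.neighborSet v).ncard : ℝ)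

/-- Isoperimetric constant of a metric graph. -/
def alpha (G : SimpleGraph V) (ℓ : Sym2 V → ℝ) : ℝ :=
  sInf {x | ∃ H : G.Subgraph, H.verts.Finite ∧ H.Connected ∧ H.edgeSet.Nonempty ∧
    x = degBdry G H / mes ℓ H.edgeSet}

/-- The star-like subgraph generated by a vertex set `U`: its edges are all the
edges of `G` incident to some vertex of `U`. -/
def starSubgraph (G : SimpleGraph V) (U : Set V) : G.Subgraph where
  verts := U ∪ {w | ∃ u ∈ U, G.Adj u w}
  Adj u w := G.Adj u w ∧ (u ∈ U ∨ w ∈ U)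
  adj_sub h := h.1
  edge_vert h := h.2.elim (fun h' => Or.inl h') (fun h' => Or.inr ⟨_, h', h.1.symm⟩)
  symm := ⟨fun u w h => ⟨h.1.symm, h.2.symm⟩⟩

open SimpleGraph in
/-- Auxiliary arithmetic lemma. -/
lemma aux_arith (pR DB k cE : ℝ) (hp : 6 ≤ pR) (h1 : DB + pR * k = 2 * cE)
    (h2 : 1 + pR * k - k ≤ cE) (hk : 0 ≤ k) :
    2 * (cE + (pR - 1)) ≤ DB * pR := by
  have hDB : DB = 2 * cE - pR * k := by linarith
  rw [hDB]
  nlinarith [mul_nonneg hk (show (0:ℝ) ≤ pR ^ 2 - 4 * pR + 2 by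
      nlinarith [mul_nonneg (show (0:ℝ) ≤ pR - 4 by linarith) (show (0:ℝ) ≤ pR by linarith)]),
    mul_nonneg (show (0:ℝ) ≤ cE - 1 - pR * k + k by linarith)
      (show (0:ℝ) ≤ 2 * pR - 2 by linarith)]

open SimpleGraph in
/-- The lower bound: every admissible subgraph has isoperimetric ratio at least `2/p`. -/
lemma aux_lower {V : Type*} [DecidableEq V] (p : ℕ) (hp : 6 ≤ p)
    {G : SimpleGraph V} (hacyc : G.IsAcyclic)
    (hreg : ∀ v : V, (G.neighborSet v).ncard = p)
    (e₀ : Sym2 V)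
    (H : G.Subgraph) (hfin : H.verts.Finite) (hconnH : H.Connected)
    (hE : H.edgeSet.Nonempty) :
    2 / (p : ℝ) ≤ degBdry G H / mes (fun e => if e = e₀ then (p : ℝ) else 1) H.edgeSet := by
  classical
  set ℓ : Sym2 V → ℝ := fun e => if e = e₀ then (p : ℝ) else 1 with hℓdef
  -- finiteness of neighbor sets
  have hGfin : ∀ v : V, (G.neighborSet v).Finite := by
    intro v
    rw [← Set.not_infinite]
    intro h
    have := h.ncard
    rw [hreg v] at this
    omega
  have hHfin : ∀ v : V, (H.neighborSet v).Finite :=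
    fun v => (hGfin v).subset (H.neighborSet_subset v)
  set d : V → ℕ := fun v => (H.neighborSet v).ncard with hd
  have hdle : ∀ v : V, d v ≤ p := by
    intro v
    rw [← hreg v]
    exact Set.ncard_le_ncard (H.neighborSet_subset v) (hGfin v)
  -- finiteness of the edge set
  have hEfin : H.edgeSet.Finite := by
    apply (Set.Finite.image2 (fun a b => s(a, b)) hfin hfin).subset
    intro e he
    induction e using Sym2.ind with
    | _ a b =>
      rw [SimpleGraph.Subgraph.mem_edgeSet] at he
      exact ⟨a, H.edge_vert he, b, H.edge_vert he.symm, rfl⟩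
  haveI : Fintype H.verts := hfin.fintype
  haveI : DecidableRel H.coe.Adj := Classical.decRel _
  -- the coercion is a tree
  have htree : H.coe.IsTree := by
    constructor
    · exact hconnH.coe
    · intro v c hc
      exact hacyc (c.map H.hom)
        ((SimpleGraph.Walk.map_isCycle_iff_of_injective
          SimpleGraph.Subgraph.hom_injective).mpr hc)
  set n : ℕ := H.verts.ncard with hn
  set cE : ℕ := H.coe.edgeFinset.card with hcEdef
  have hncard : Fintype.card H.verts = n := by
    rw [hn, ← Nat.card_coe_set_eq, Nat.card_eq_fintype_card]
  have hcE : cE + 1 = n := by rw [← hncard]; exact htree.card_edgeFinset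
  -- degrees
  have hdeg : ∀ v : H.verts, H.coe.degree v = d ↑v := by
    intro v
    calc H.coe.degree v = Fintype.card (H.coe.neighborSet v) :=
          (card_neighborSet_eq_degree _ _).symm
      _ = Nat.card (H.coe.neighborSet v) := Nat.card_eq_fintype_card.symm
      _ = Nat.card (H.neighborSet ↑v) := Nat.card_congr (Subgraph.coeNeighborSetEquiv v)
      _ = d ↑v := Nat.card_coe_set_eq _
  set VF : Finset V := hfin.toFinset with hVF
  have hsum2 : ∑ v : H.verts, d ↑v = 2 * H.coe.edgeFinset.card := by
    rw [← H.coe.sum_degrees_eq_twice_card_edges]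
    refine Finset.sum_congr rfl fun v _ => ?_
    have key : ∀ (inst : Fintype (H.coe.neighborSet v)),
        d ↑v = @SimpleGraph.degree _ H.coe v inst := by
      intro inst
      rw [← @SimpleGraph.card_neighborSet_eq_degree _ H.coe v inst,
        ← Nat.card_eq_fintype_card]
      exact ((Nat.card_congr (SimpleGraph.Subgraph.coeNeighborSetEquiv v)).trans
        (Nat.card_coe_set_eq _)).symm
    exact key _
  have hVFsum : ∑ v ∈ VF, d v = 2 * cE := by
    rw [Finset.sum_subtype VF (fun x => hfin.mem_toFinset) d]
    exact hsum2
  have hVFcard : VF.card = n := by rw [hn, Set.ncard_eq_toFinset_card _ hfin]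
  -- partition into boundary and interior
  set Bf : Finset V := VF.filter (fun v => d v < p) with hBf
  set If : Finset V := VF.filter (fun v => ¬ d v < p) with hIf
  have hsplit : ∑ v ∈ Bf, d v + ∑ v ∈ If, d v = 2 * cE := by
    rw [Finset.sum_filter_add_sum_filter_not]; exact hVFsum
  have hIsum : ∑ v ∈ If, d v = p * If.card := by
    rw [Finset.sum_congr rfl (fun v hv => ?_), Finset.sum_const, smul_eq_mul, mul_comm]
    rw [hIf, Finset.mem_filter] at hv
    have := hdle v
    omega
  have hcards : Bf.card + If.card = n := by
    rw [← hVFcard]; exact Finset.card_filter_add_card_filter_not _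
  set DB : ℕ := ∑ v ∈ Bf, d v with hDB
  set k : ℕ := If.card with hk
  -- every vertex has degree at least one
  have h2n : 2 ≤ n := by
    obtain ⟨e, he⟩ := hE
    induction e using Sym2.ind with
    | _ a b =>
      rw [SimpleGraph.Subgraph.mem_edgeSet] at he
      have hab : a ≠ b := he.ne
      have hsub : ({a, b} : Set V) ⊆ H.verts := by
        rw [Set.insert_subset_iff, Set.singleton_subset_iff]
        exact ⟨H.edge_vert he, H.edge_vert he.symm⟩
      calc 2 = ({a, b} : Set V).ncard := (Set.ncard_pair hab).symm
        _ ≤ n := Set.ncard_le_ncard hsub hfin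
  have hd1 : ∀ v ∈ VF, 1 ≤ d v := by
    intro v hv
    rw [hfin.mem_toFinset] at hv
    obtain ⟨w, hw, hwv⟩ : ∃ w ∈ H.verts, w ≠ v := by
      by_contra hcon
      push_neg at hcon
      have hsub : H.verts ⊆ {v} := fun x hx => hcon x hx
      have := Set.ncard_le_ncard hsub (Set.finite_singleton v)
      rw [Set.ncard_singleton] at this
      omega
    obtain ⟨q⟩ := hconnH.coe ⟨v, hv⟩ ⟨w, hw⟩
    have hne : (⟨v, hv⟩ : H.verts) ≠ ⟨w, hw⟩ := by
      simp only [ne_eq, Subtype.mk.injEq]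
      exact fun h => hwv h.symm
    obtain ⟨u, hadj, -, -⟩ := SimpleGraph.Walk.not_nil_iff.mp
      (SimpleGraph.Walk.not_nil_of_ne (p := q) hne)
    have hmem : (u : V) ∈ H.neighborSet v := by
      rw [SimpleGraph.Subgraph.coe_adj] at hadj
      exact hadj
    exact (Set.ncard_pos (hHfin v)).mpr ⟨u, hmem⟩
  have hDBk : n ≤ DB + k := by
    have : Bf.card ≤ DB := by
      have := Finset.card_nsmul_le_sum Bf d 1
        (fun v hv => hd1 v (Finset.mem_filter.mp hv).1)
      simpa using this
    omega
  -- degBdry equals the boundary sum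
  have hbdry : bdry G H = ↑Bf := by
    ext v
    simp only [bdry, Set.mem_setOf_eq, hBf, Finset.coe_filter, hVF, hd, hfin.mem_toFinset, hreg v]
  have hdegBdry : degBdry G H = (DB : ℝ) := by
    rw [degBdry, hbdry, finsum_mem_coe_finset, hDB, Nat.cast_sum]
  -- the edge finset of H
  set EF : Finset (Sym2 V) := hEfin.toFinset with hEF
  have hEFcard : EF.card = cE := by
    have h1 : H.edgeSet.ncard = EF.card := Set.ncard_eq_toFinset_card _ hEfin
    have h2 : H.coe.edgeSet.ncard = cE := by
      rw [hcEdef, SimpleGraph.edgeFinset, Set.ncard_eq_toFinset_card']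
    rw [← h1, ← SimpleGraph.Subgraph.image_coe_edgeSet_coe H,
      Set.ncard_image_of_injective _ (Sym2.map.injective Subtype.val_injective), h2]
  have hmes_eq : mes ℓ H.edgeSet = ∑ e ∈ EF, ℓ e := by
    rw [mes, ← hEfin.coe_toFinset, finsum_mem_coe_finset]
  have hmes_le : mes ℓ H.edgeSet ≤ (cE : ℝ) + ((p : ℝ) - 1) := by
    rw [hmes_eq]
    have : ∑ e ∈ EF, ℓ e = ∑ e ∈ EF, ((1 : ℝ) + if e = e₀ then (p : ℝ) - 1 else 0) := by
      refine Finset.sum_congr rfl fun e _ => ?_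
      by_cases h : e = e₀ <;> simp [hℓdef, h]
    rw [this, Finset.sum_add_distrib, Finset.sum_const, Finset.sum_ite_eq' EF e₀]
    have hple : (0:ℝ) ≤ (p : ℝ) - 1 := by
      have : (1:ℝ) ≤ (p:ℝ) := by exact_mod_cast (show 1 ≤ p by omega)
      linarith
    have : (if e₀ ∈ EF then (p : ℝ) - 1 else 0) ≤ (p : ℝ) - 1 := by
      split <;> linarith
    rw [← hEFcard]
    simpa using by linarith [this]
  have hmes_pos : 0 < mes ℓ H.edgeSet := by
    rw [hmes_eq]
    have hne : EF.Nonempty := by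
      obtain ⟨e, he⟩ := hE
      exact ⟨e, hEfin.mem_toFinset.mpr he⟩
    have h1 : (EF.card : ℝ) ≤ ∑ e ∈ EF, ℓ e := by
      calc (EF.card : ℝ) = ∑ _e ∈ EF, (1:ℝ) := by rw [Finset.sum_const]; simp
        _ ≤ ∑ e ∈ EF, ℓ e := by
          refine Finset.sum_le_sum fun e _ => ?_
          by_cases h : e = e₀ <;> simp [hℓdef, h]
          exact_mod_cast (show 1 ≤ p by omega)
    have : 0 < EF.card := Finset.card_pos.mpr hne
    have : (1:ℝ) ≤ (EF.card : ℝ) := by exact_mod_cast this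
    linarith
  -- final computation
  have hp0 : (0:ℝ) < (p:ℝ) := by exact_mod_cast (by omega : 0 < p)
  rw [div_le_div_iff₀ hp0 hmes_pos, hdegBdry]
  have harith : 2 * ((cE : ℝ) + ((p : ℝ) - 1)) ≤ (DB : ℝ) * (p : ℝ) := by
    apply aux_arith (p : ℝ) (DB : ℝ) (k : ℝ) (cE : ℝ)
    · exact_mod_cast hp
    · have : DB + p * k = 2 * cE := by rw [← hsplit, hIsum]
      exact_mod_cast this
    · have h1 : (n : ℝ) ≤ (DB : ℝ) + (k : ℝ) := by exact_mod_cast hDBk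
      have h2 : (cE : ℝ) + 1 = (n : ℝ) := by exact_mod_cast hcE
      have h3 : (DB : ℝ) + (p : ℝ) * (k : ℝ) = 2 * (cE : ℝ) := by
        have : DB + p * k = 2 * cE := by rw [← hsplit, hIsum]
        exact_mod_cast this
      linarith
    · positivity
  calc 2 * mes ℓ H.edgeSet ≤ 2 * ((cE : ℝ) + ((p : ℝ) - 1)) := by linarith
    _ ≤ (DB : ℝ) * (p : ℝ) := harith

/-- Example 4.3: for a `p`-regular infinite metric tree (`p ≥ 6`) with one
distinguished edge of length `p` and all other edges of length `1`, `α(G) = 2/p`. -/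
theorem statement_17 {V : Type*} [Infinite V] [DecidableEq V] (p : ℕ) (hp : 6 ≤ p)
    (G : SimpleGraph V) (hconn : G.Connected) (hacyc : G.IsAcyclic)
    (hreg : ∀ v : V, (G.neighborSet v).ncard = p)
    (e₀ : Sym2 V) (he₀ : e₀ ∈ G.edgeSet) :
    alpha G (fun e => if e = e₀ then (p : ℝ) else 1) = 2 / (p : ℝ) := by
  classical
  set ℓ : Sym2 V → ℝ := fun e => if e = e₀ then (p : ℝ) else 1 with hℓdef
  set S : Set ℝ := {x | ∃ H : G.Subgraph, H.verts.Finite ∧ H.Connected ∧ H.edgeSet.Nonempty ∧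
    x = degBdry G H / mes ℓ H.edgeSet} with hS
  have hlb : ∀ x ∈ S, 2 / (p : ℝ) ≤ x := by
    rintro x ⟨H, hfin, hconnH, hE, rfl⟩
    exact aux_lower p hp hacyc hreg e₀ H hfin hconnH hE
  have hmem : 2 / (p : ℝ) ∈ S := by
    induction e₀ using Sym2.ind with
    | _ a b =>
      rw [SimpleGraph.mem_edgeSet] at he₀
      refine ⟨G.subgraphOfAdj he₀, ?_, SimpleGraph.Subgraph.subgraphOfAdj_connected he₀, ?_, ?_⟩
      · rw [SimpleGraph.subgraphOfAdj_verts]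
        exact (Set.finite_singleton b).insert a
      · rw [SimpleGraph.edgeSet_subgraphOfAdj]
        exact ⟨s(a, b), rfl⟩
      · have hab : a ≠ b := he₀.ne
        have hbd : bdry G (G.subgraphOfAdj he₀) = {a, b} := by
          ext v
          simp only [bdry, Set.mem_setOf_eq, SimpleGraph.subgraphOfAdj_verts, hreg v]
          constructor
          · rintro ⟨hv, -⟩; exact hv
          · rintro hv
            refine ⟨hv, ?_⟩
            rcases hv with rfl | rfl
            · rw [SimpleGraph.neighborSet_fst_subgraphOfAdj, Set.ncard_singleton]; omega
            · rw [SimpleGraph.neighborSet_snd_subgraphOfAdj, Set.ncard_singleton]; omega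
        have hdb : degBdry G (G.subgraphOfAdj he₀) = 2 := by
          rw [degBdry, hbd, finsum_mem_pair hab,
            SimpleGraph.neighborSet_fst_subgraphOfAdj,
            SimpleGraph.neighborSet_snd_subgraphOfAdj, Set.ncard_singleton]
          norm_num
        have hms : mes ℓ (G.subgraphOfAdj he₀).edgeSet = (p : ℝ) := by
          rw [SimpleGraph.edgeSet_subgraphOfAdj, mes, finsum_mem_singleton]
          simp [hℓdef]
        rw [hdb, hms]
  have hbdd : BddBelow S := ⟨2 / (p : ℝ), fun x hx => hlb x hx⟩
  rw [alpha, ← hS]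
  exact le_antisymm (csInf_le hbdd hmem) (le_csInf ⟨_, hmem⟩ hlb)
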